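/- Let K ⊂ ℂ be compact of diameter d = 2 containing -1 and 1, with width w > 0. Let μ be a finite nonnegative Borel measure on K, and suppose for some θ, δ ∈ (0,1) that μ(K_δ) ≥ θ μ(K), where K_δ = {x + iy ∈ K : x ∈ [-δ, δ]}. If w + δ < 1, then there exists A with either 0 < A ≤ δ or -δ ≤ A - w < 0 such that the set Q* = {x + iy ∈ K : A - w ≤ x ≤ A} satisfies μ(Q*) ≥ (w/2) θ μ(K). -/

import Mathlib

open Complex MeasureTheory

/-- The width of a planar set: the minimum over directions `γ` of the length of the
projection of `K` onto the direction `e^{iγ}`. -/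
noncomputable def setWidth (K : Set ℂ) : ℝ :=
  ⨅ γ : ℝ, (sSup ((fun z : ℂ => (z * Complex.exp (γ * Complex.I)).re) '' K) -
    sInf ((fun z : ℂ => (z * Complex.exp (γ * Complex.I)).re) '' K))

/-- Lemma 2: if `K` is compact of diameter `2` containing `±1`, with width `w > 0`,
`μ` is a finite measure with `μ(K_δ) ≥ θ μ(K)` and `w + δ < 1`, then there exists `A`
with either `0 < A ≤ δ` or `-δ ≤ A - w < 0` such that
`Q* = {x + iy ∈ K : A - w ≤ x ≤ A}` satisfies `μ(Q*) ≥ (w/2) θ μ(K)`. -/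
theorem stmt_6 (K : Set ℂ) (hK : IsCompact K) (hdiam : Metric.diam K = 2)
    (h1 : (-1 : ℂ) ∈ K) (h2 : (1 : ℂ) ∈ K)
    (w : ℝ) (hwdef : setWidth K = w) (hw : 0 < w)
    (μ : Measure ℂ) [IsFiniteMeasure μ]
    (θ δ : ℝ) (hθ : θ ∈ Set.Ioo (0 : ℝ) 1) (hδ : δ ∈ Set.Ioo (0 : ℝ) 1)
    (hμK : ENNReal.ofReal θ * μ K ≤ μ {z ∈ K | z.re ∈ Set.Icc (-δ) δ})
    (hwδ : w + δ < 1) :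
    ∃ A : ℝ, ((0 < A ∧ A ≤ δ) ∨ (-δ ≤ A - w ∧ A - w < 0)) ∧
      ENNReal.ofReal (w / 2 * θ) * μ K ≤ μ {z ∈ K | z.re ∈ Set.Icc (A - w) A} := by
  classical
  obtain ⟨hθ0, hθ1⟩ := hθ
  obtain ⟨hδ0, hδ1⟩ := hδ
  rcases eq_or_ne (μ K) 0 with hμ0 | hμ0
  · exact ⟨δ, Or.inl ⟨hδ0, le_refl δ⟩, by simp [hμ0]⟩
  have hμfin : μ K ≠ ⊤ := measure_ne_top μ K
  set N : ℕ := ⌈2 * δ / w⌉₊ with hNdef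
  have hNpos : 0 < N := Nat.ceil_pos.mpr (by positivity)
  have hNge : 2 * δ ≤ (N : ℝ) * w := by
    have h := Nat.le_ceil (2 * δ / w)
    rw [div_le_iff₀ hw] at h
    exact_mod_cast h
  have hNlt : (N : ℝ) * w < 2 := by
    have h : (N : ℝ) < 2 * δ / w + 1 := Nat.ceil_lt_add_one (by positivity)
    have h2 : (N : ℝ) * w < (2 * δ / w + 1) * w := by nlinarith
    have h3 : (2 * δ / w + 1) * w = 2 * δ + w := by field_simp
    nlinarith
  set A : ℕ → ℝ := fun i => min (-δ + ((i : ℝ) + 1) * w) δ with hAdef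
  have hAδ : ∀ i, A i ≤ δ := fun i => min_le_right _ _
  have hAcond : ∀ i, (0 < A i ∧ A i ≤ δ) ∨ (-δ ≤ A i - w ∧ A i - w < 0) := by
    intro i
    by_cases h : 0 < A i
    · exact Or.inl ⟨h, hAδ i⟩
    · push_neg at h
      refine Or.inr ⟨?_, by linarith⟩
      have hmin : A i = -δ + ((i : ℝ) + 1) * w := by
        rcases le_total (-δ + ((i : ℝ) + 1) * w) δ with h1 | h1
        · exact min_eq_left h1
        · have h2 : A i = δ := min_eq_right h1
          linarith
      have hiw : w ≤ ((i : ℝ) + 1) * w := by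
        nlinarith [Nat.cast_nonneg (α := ℝ) i]
      linarith
  have hcover : {z ∈ K | z.re ∈ Set.Icc (-δ) δ} ⊆
      ⋃ i ∈ Finset.range N, {z ∈ K | z.re ∈ Set.Icc (A i - w) (A i)} := by
    intro z hz
    obtain ⟨hzK, hzl, hzr⟩ := hz
    have hex : ∃ i, i < N ∧ z.re ≤ A i := by
      refine ⟨N - 1, Nat.sub_lt hNpos one_pos, ?_⟩
      have hc : ((N - 1 : ℕ) : ℝ) + 1 = (N : ℝ) := by
        have := Nat.succ_pred_eq_of_pos hNpos
        exact_mod_cast congrArg (Nat.cast (R := ℝ)) this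
      have hge : δ ≤ -δ + (((N - 1 : ℕ) : ℝ) + 1) * w := by
        rw [hc]; linarith
      exact hzr.trans (le_min hge le_rfl)
    set i := Nat.find hex with hidef
    obtain ⟨hiN, hile⟩ := Nat.find_spec hex
    have hlow : A i - w ≤ z.re := by
      rcases Nat.eq_zero_or_pos i with h0 | h0
      · have : A i - w ≤ -δ := by
          have : A i ≤ -δ + ((i : ℝ) + 1) * w := min_le_left _ _
          rw [h0] at this ⊢
          simp only [Nat.cast_zero] at this
          linarith
        linarith
      · have hprev := Nat.find_min hex (Nat.sub_lt h0 one_pos)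
        push_neg at hprev
        have hgt : A (i - 1) < z.re :=
          hprev ((Nat.sub_lt h0 one_pos).trans hiN)
        have hc : ((i - 1 : ℕ) : ℝ) + 1 = (i : ℝ) := by
          have := Nat.succ_pred_eq_of_pos h0
          exact_mod_cast congrArg (Nat.cast (R := ℝ)) this
        have hltδ : A (i - 1) < δ := lt_of_lt_of_le hgt hzr
        have hmin : A (i - 1) = -δ + (i : ℝ) * w := by
          rcases le_total (-δ + (((i - 1 : ℕ) : ℝ) + 1) * w) δ with h1 | h1
          · rw [hAdef]; simp only; rw [min_eq_left h1, hc]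
          · have h2 : A (i - 1) = δ := min_eq_right h1
            linarith
        have : A i - w ≤ -δ + (i : ℝ) * w := by
          have := min_le_left (-δ + ((i : ℝ) + 1) * w) δ
          show min (-δ + ((i : ℝ) + 1) * w) δ - w ≤ _
          linarith
        linarith [hmin ▸ hgt]
    simp only [Set.mem_iUnion, Finset.mem_range]
    exact ⟨i, hiN, hzK, hlow, hile⟩
  by_contra hcon
  push_neg at hcon
  have hlt : ∀ i ∈ Finset.range N,
      μ {z ∈ K | z.re ∈ Set.Icc (A i - w) (A i)} ≤ ENNReal.ofReal (w / 2 * θ) * μ K :=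
    fun i _ => (hcon (A i) (hAcond i)).le
  have hsum : μ {z ∈ K | z.re ∈ Set.Icc (-δ) δ} ≤
      ∑ i ∈ Finset.range N, μ {z ∈ K | z.re ∈ Set.Icc (A i - w) (A i)} :=
    (measure_mono hcover).trans (measure_biUnion_finset_le _ _)
  have hsum2 : ∑ i ∈ Finset.range N, μ {z ∈ K | z.re ∈ Set.Icc (A i - w) (A i)} ≤
      (N : ENNReal) * (ENNReal.ofReal (w / 2 * θ) * μ K) := by
    calc ∑ i ∈ Finset.range N, μ {z ∈ K | z.re ∈ Set.Icc (A i - w) (A i)}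
        ≤ (Finset.range N).card • (ENNReal.ofReal (w / 2 * θ) * μ K) :=
          Finset.sum_le_card_nsmul _ _ _ hlt
      _ = (N : ENNReal) * (ENNReal.ofReal (w / 2 * θ) * μ K) := by
          rw [Finset.card_range, nsmul_eq_mul]
  have heq : (N : ENNReal) * (ENNReal.ofReal (w / 2 * θ) * μ K) =
      ENNReal.ofReal ((N : ℝ) * (w / 2 * θ)) * μ K := by
    rw [← mul_assoc, ← ENNReal.ofReal_natCast N,
      ← ENNReal.ofReal_mul (Nat.cast_nonneg N)]
  have hstrict : ENNReal.ofReal ((N : ℝ) * (w / 2 * θ)) * μ K <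
      ENNReal.ofReal θ * μ K := by
    apply (ENNReal.mul_lt_mul_iff_left hμ0 hμfin).mpr
    apply (ENNReal.ofReal_lt_ofReal_iff hθ0).mpr
    nlinarith
  have : ENNReal.ofReal θ * μ K < ENNReal.ofReal θ * μ K :=
    lt_of_le_of_lt (hμK.trans (hsum.trans (hsum2.trans_eq heq))) hstrict
  exact absurd this (lt_irrefl _)
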